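/- Let P be a nonzero homogeneous polynomial in F_2[x_1,...,x_n] and let m(P) be its lexicographically largest monomial. If m(P) = x_1^{i_1}···x_n^{i_n} is not admissible (i.e. there exists 1 < s ≤ n with 2 i_s > i_{s-1}), then there exists a matrix σ ∈ M_n(F_2) (acting by linear substitution of variables) such that m(σ·P) > m(P) in the lexicographic order. -/

import Mathlib

open MvPolynomial

/-- The left action of `M_n(F₂)` on `F₂[x₁,…,x_n]` by linear substitution:
`(σ·f)(x₁,…,x_n) = f(Σ_j σ_{j,1} x_j, …, Σ_j σ_{j,n} x_j)`. -/
noncomputable def matAct {n : ℕ} (σ : Matrix (Fin n) (Fin n) (ZMod 2))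
    (f : MvPolynomial (Fin n) (ZMod 2)) : MvPolynomial (Fin n) (ZMod 2) :=
  MvPolynomial.aeval (fun i => ∑ j, MvPolynomial.C (σ j i) * MvPolynomial.X j) f

namespace Stmt6Aux

open Finsupp (single)

variable {n : ℕ}

lemma zmod2_one {x : ZMod 2} (hx : x ≠ 0) : x = 1 := by revert x; decide

lemma lex_lt_wit {a b : Fin n →₀ ℕ} (l : Fin n) (h1 : ∀ l', l' < l → a l' = b l')
    (h2 : a l < b l) : toLex a < toLex b :=
  Finsupp.Lex.lt_iff.mpr ⟨l, h1, h2⟩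

lemma key_le {m e : Fin n →₀ ℕ} {i j : Fin n} (hij : i < j)
    (hle : toLex e ≤ toLex m) (hoff : ∀ l, l ≠ i → l ≠ j → e l = m l) : e i ≤ m i := by
  rcases (le_iff_eq_or_lt.mp hle).imp_right Finsupp.Lex.lt_iff.mp with heq | ⟨l₀, hbelow, hlt⟩
  · exact le_of_eq (congrFun (congrArg _ (toLex.injective heq)) i)
  · by_cases h1 : l₀ = i
    · subst h1; exact le_of_lt hlt
    by_cases h2 : l₀ = j
    · subst h2; exact le_of_eq (hbelow i hij)
    · exact absurd (hoff l₀ h1 h2) (ne_of_lt hlt)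

lemma pack (f : MvPolynomial (Fin n) (ZMod 2)) (m μ : Fin n →₀ ℕ)
    (hμ : μ ∈ f.support) (h : toLex m < toLex μ) :
    ∃ m' ∈ f.support, (∀ e ∈ f.support, toLex e ≤ toLex m') ∧ toLex m < toLex m' := by
  obtain ⟨m', hm', hmax⟩ := f.support.exists_max_image (fun e => toLex e) ⟨μ, hμ⟩
  exact ⟨m', hm', hmax, lt_of_lt_of_le h (hmax μ hμ)⟩

lemma matAct_perm (g : Equiv.Perm (Fin n)) (P : MvPolynomial (Fin n) (ZMod 2)) :
    matAct (fun a b => if a = g b then 1 else 0) P = rename g P := by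
  rw [← aeval_X_left_apply (rename g P), aeval_rename]
  show aeval _ P = aeval (X ∘ g : Fin n → MvPolynomial (Fin n) (ZMod 2)) P
  have hfun : (fun b => ∑ a, C (if a = g b then (1 : ZMod 2) else 0) * X a)
      = (X ∘ ⇑g : Fin n → MvPolynomial (Fin n) (ZMod 2)) := by
    funext b
    simp [apply_ite C, ite_mul, Finset.sum_ite_eq']
  rw [hfun]

lemma case_swap (P : MvPolynomial (Fin n) (ZMod 2)) (m e : Fin n →₀ ℕ)
    (he : e ∈ P.support) (i j : Fin n) (hij : i < j)
    (hlow : ∀ l, l < i → e l = m l) (hbig : m i < e j) :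
    ∃ σ : Matrix (Fin n) (Fin n) (ZMod 2), ∃ μ ∈ (matAct σ P).support, toLex m < toLex μ := by
  classical
  set g : Equiv.Perm (Fin n) := Equiv.swap i j with hg
  refine ⟨fun a b => if a = g b then 1 else 0, Finsupp.mapDomain g e, ?_, ?_⟩
  · rw [matAct_perm, mem_support_iff, coeff_rename_mapDomain _ g.injective]
    exact mem_support_iff.mp he
  · have hap : ∀ l, Finsupp.mapDomain (⇑g) e l = e (g l) := by
      intro l
      rw [Finsupp.mapDomain_equiv_apply]
      simp [hg, Equiv.symm_swap]
    refine lex_lt_wit i (fun l' hl' => ?_) ?_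
    · rw [hap, hg, Equiv.swap_apply_of_ne_of_ne (ne_of_lt hl') (ne_of_lt (lt_trans hl' hij))]
      exact (hlow l' hl').symm
    · rw [hap, hg, Equiv.swap_apply_left]; exact hbig

noncomputable def phi (i j : Fin n) : Fin n → MvPolynomial (Fin n) (ZMod 2) :=
  fun l => if l = j then X i + X j else X l

noncomputable def trMat (i j : Fin n) : Matrix (Fin n) (Fin n) (ZMod 2) :=
  fun a b => if a = b then 1 else if a = i ∧ b = j then 1 else 0

lemma trMat_row (i j : Fin n) (hij : i ≠ j) (b : Fin n) :
    ∑ a, C (trMat i j a b) * X a = phi i j b := by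
  classical
  have hpt : ∀ a : Fin n, C (trMat i j a b) * X a
      = ((if a = b then X a else 0) + (if a = i ∧ b = j then X a else 0)
          : MvPolynomial (Fin n) (ZMod 2)) := by
    intro a
    unfold trMat
    by_cases h1 : a = b <;> by_cases h2 : a = i ∧ b = j <;>
      simp_all [map_one, map_zero]
  rw [Finset.sum_congr rfl (fun a _ => hpt a), Finset.sum_add_distrib]
  by_cases hb : b = j
  · subst hb
    rw [Finset.sum_ite_eq' Finset.univ b X]
    simp only [and_true]
    rw [Finset.sum_ite_eq' Finset.univ i X]
    simp [phi, add_comm]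
  · rw [Finset.sum_ite_eq' Finset.univ b X]
    simp [phi, hb]

lemma eps_apply (e : Fin n →₀ ℕ) (r : ℕ) (i j : Fin n) (hij : i ≠ j) (l : Fin n) :
    (e.erase j + (Finsupp.single i r + Finsupp.single j (e j - r))) l
      = if l = i then e i + r else if l = j then e j - r else e l := by
  classical
  rcases eq_or_ne l i with rfl | h1
  · simp [Finsupp.erase_apply, hij, Finsupp.single_apply, Ne.symm hij]
  · rcases eq_or_ne l j with rfl | h2
    · simp [Finsupp.erase_apply, Finsupp.single_apply, h1, Ne.symm h1]
    · simp [Finsupp.erase_apply, h1, h2, Finsupp.single_apply, Ne.symm h1, Ne.symm h2]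

lemma aeval_phi_monomial (i j : Fin n) (hij : i ≠ j) (e : Fin n →₀ ℕ) :
    aeval (phi i j) (monomial e (1 : ZMod 2)) =
      ∑ r ∈ Finset.range (e j + 1),
        ((e j).choose r : MvPolynomial (Fin n) (ZMod 2)) *
          monomial (e.erase j + (Finsupp.single i r + Finsupp.single j (e j - r))) 1 := by
  classical
  have hsplit : monomial e (1 : ZMod 2)
      = monomial (e.erase j) 1 * monomial (Finsupp.single j (e j)) 1 := by
    rw [monomial_mul, mul_one, Finsupp.erase_add_single]
  rw [hsplit, map_mul]
  have h1 : aeval (phi i j) (monomial (e.erase j) (1 : ZMod 2)) = monomial (e.erase j) 1 := by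
    rw [aeval_monomial, map_one, one_mul]
    have h : (e.erase j).prod (fun l c => phi i j l ^ c)
        = (e.erase j).prod (fun l c => X l ^ c) := by
      refine Finsupp.prod_congr (fun l hl => ?_)
      have hlj : l ≠ j := by
        rintro rfl
        rw [Finsupp.mem_support_iff, Finsupp.erase_same] at hl
        exact hl rfl
      simp [phi, hlj]
    rw [h, monomial_eq, map_one, one_mul]
  have h2 : aeval (phi i j) (monomial (Finsupp.single j (e j)) (1 : ZMod 2))
      = (X i + X j) ^ (e j) := by
    rw [aeval_monomial, map_one, one_mul]
    rw [Finsupp.prod_single_index (by simp)]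
    simp [phi]
  rw [h1, h2, add_pow, Finset.mul_sum]
  refine Finset.sum_congr rfl (fun r hr => ?_)
  rw [X_pow_eq_monomial, X_pow_eq_monomial, monomial_mul, mul_one]
  calc monomial (e.erase j) (1 : ZMod 2) *
        (monomial (Finsupp.single i r + Finsupp.single j (e j - r)) 1 *
          ((e j).choose r : MvPolynomial (Fin n) (ZMod 2)))
      = ((e j).choose r : MvPolynomial (Fin n) (ZMod 2)) *
        (monomial (e.erase j) 1 * monomial (Finsupp.single i r + Finsupp.single j (e j - r)) 1) := by
        ring
    _ = _ := by rw [monomial_mul, mul_one]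

lemma coeff_aeval_phi (i j : Fin n) (hij : i ≠ j) (e μ : Fin n →₀ ℕ) :
    coeff μ (aeval (phi i j) (monomial e (1 : ZMod 2))) =
      if (∀ l, l ≠ i → l ≠ j → e l = μ l) ∧ e i ≤ μ i ∧ e i + e j = μ i + μ j then
        ((e j).choose (μ i - e i) : ZMod 2) else 0 := by
  classical
  rw [aeval_phi_monomial i j hij e, coeff_sum]
  have hterm : ∀ r, coeff μ (((e j).choose r : MvPolynomial (Fin n) (ZMod 2)) *
      monomial (e.erase j + (single i r + single j (e j - r))) 1)
      = ((e j).choose r : ZMod 2) *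
        (if e.erase j + (single i r + single j (e j - r)) = μ then 1 else 0) := by
    intro r
    rw [← C_eq_coe_nat, coeff_C_mul, coeff_monomial]
  by_cases hcond : (∀ l, l ≠ i → l ≠ j → e l = μ l) ∧ e i ≤ μ i ∧ e i + e j = μ i + μ j
  · obtain ⟨hoff, hle, hsum⟩ := hcond
    rw [if_pos ⟨hoff, hle, hsum⟩]
    have hr₀mem : μ i - e i ∈ Finset.range (e j + 1) := by rw [Finset.mem_range]; omega
    rw [Finset.sum_eq_single_of_mem (μ i - e i) hr₀mem ?_]
    · have hεμ : e.erase j + (single i (μ i - e i) + single j (e j - (μ i - e i))) = μ := by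
        ext l
        rw [eps_apply e (μ i - e i) i j hij l]
        rcases eq_or_ne l i with rfl | h1
        · rw [if_pos rfl]; omega
        rcases eq_or_ne l j with rfl | h2
        · rw [if_neg h1, if_pos rfl]; omega
        · rw [if_neg h1, if_neg h2]; exact hoff l h1 h2
      rw [hterm, hεμ, if_pos rfl, mul_one]
    · intro r hr hrne
      rw [hterm]
      have hne : ¬ (e.erase j + (single i r + single j (e j - r)) = μ) := by
        intro hεμ
        have := congrFun (congrArg (⇑) hεμ) i
        rw [eps_apply e r i j hij i, if_pos rfl] at this
        omega
      rw [if_neg hne, mul_zero]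
  · rw [if_neg hcond]
    apply Finset.sum_eq_zero
    intro r hr
    rw [hterm]
    have hne : ¬ (e.erase j + (single i r + single j (e j - r)) = μ) := by
      intro hεμ
      apply hcond
      have happ : ∀ l, (if l = i then e i + r else if l = j then e j - r else e l) = μ l :=
        fun l => (eps_apply e r i j hij l) ▸ congrFun (congrArg (⇑) hεμ) l
      have hi := happ i
      rw [if_pos rfl] at hi
      have hj := happ j
      rw [if_neg (Ne.symm hij), if_pos rfl] at hj
      have hrle : r ≤ e j := by
        have := Finset.mem_range.mp hr; omega
      refine ⟨fun l h1 h2 => ?_, by omega, by omega⟩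
      have := happ l
      rw [if_neg h1, if_neg h2] at this
      exact this
    rw [if_neg hne, mul_zero]

lemma case_trans (P : MvPolynomial (Fin n) (ZMod 2)) (m : Fin n →₀ ℕ)
    (hmem : m ∈ P.support) (hmax : ∀ e ∈ P.support, toLex e ≤ toLex m)
    (i j : Fin n) (hij : i < j)
    (hcase : ∀ e ∈ P.support, (∀ l, l < i → e l = m l) → e j ≤ m i)
    (hineq : m i < 2 * m j) :
    ∃ σ : Matrix (Fin n) (Fin n) (ZMod 2), ∃ μ ∈ (matAct σ P).support, toLex m < toLex μ := by
  classical
  have hijne : i ≠ j := ne_of_lt hij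
  set T : Finset (Fin n →₀ ℕ) := P.support.filter
    (fun e => (∀ l, l ≠ i → l ≠ j → e l = m l) ∧ e i + e j = m i + m j) with hTdef
  have hmT : m ∈ T := Finset.mem_filter.mpr ⟨hmem, fun l _ _ => rfl, rfl⟩
  have hTle : ∀ e ∈ T, e i ≤ m i := fun e he =>
    key_le hij (hmax e (Finset.mem_filter.mp he).1) (Finset.mem_filter.mp he).2.1
  have hTsum : ∀ e ∈ T, e i + e j = m i + m j := fun e he => (Finset.mem_filter.mp he).2.2
  have hToff : ∀ e ∈ T, ∀ l, l ≠ i → l ≠ j → e l = m l := fun e he => (Finset.mem_filter.mp he).2.1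
  have hTj : ∀ e ∈ T, e j ≤ m i := by
    intro e he
    refine hcase e (Finset.mem_filter.mp he).1 (fun l hl => ?_)
    exact hToff e he l (ne_of_lt hl) (ne_of_lt (lt_trans hl hij))
  have hTjge : ∀ e ∈ T, m j ≤ e j := by
    intro e he; have h1 := hTle e he; have h2 := hTsum e he; omega
  have hTige : ∀ e ∈ T, m j ≤ e i := by
    intro e he; have h1 := hTj e he; have h2 := hTsum e he; omega
  have hTuniq : ∀ e ∈ T, ∀ e' ∈ T, e i = e' i → e = e' := by
    intro e he e' he' hii
    ext l
    rcases eq_or_ne l i with rfl | h1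
    · exact hii
    rcases eq_or_ne l j with rfl | h2
    · have h3 := hTsum e he; have h4 := hTsum e' he'; omega
    · rw [hToff e he l h1 h2, hToff e' he' l h1 h2]
  set Q : Polynomial (ZMod 2) :=
    ∑ e ∈ T, Polynomial.X ^ (e i) * (1 + Polynomial.X) ^ (e j) with hQdef
  have hQcoeff : ∀ c, Q.coeff c
      = ∑ e ∈ T, (if e i ≤ c then ((e j).choose (c - e i) : ZMod 2) else 0) := by
    intro c
    rw [hQdef, Polynomial.finset_sum_coeff]
    refine Finset.sum_congr rfl fun e he => ?_
    rw [mul_comm, Polynomial.coeff_mul_X_pow']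
    split_ifs with h
    · rw [Polynomial.coeff_one_add_X_pow]
    · rfl
  -- Q has coefficient 1 at the minimal `e i`
  have hTne : T.Nonempty := ⟨m, hmT⟩
  have himne : (T.image fun e => e i).Nonempty := hTne.image _
  obtain ⟨e0, he0T, he0⟩ := Finset.mem_image.mp ((T.image fun e => e i).min'_mem himne)
  have ha0le : ∀ e ∈ T, (T.image fun e => e i).min' himne ≤ e i := fun e he =>
    Finset.min'_le _ _ (Finset.mem_image_of_mem _ he)
  have hQa0 : Q.coeff ((T.image fun e => e i).min' himne) = 1 := by
    rw [hQcoeff]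
    rw [Finset.sum_eq_single_of_mem e0 he0T ?_]
    · rw [if_pos (le_of_eq he0), he0, Nat.sub_self, Nat.choose_zero_right, Nat.cast_one]
    · intro e heT hne
      by_cases h : e i ≤ (T.image fun e => e i).min' himne
      · have heq : e i = e0 i := le_antisymm (he0 ▸ h) (he0 ▸ ha0le e heT)
        exact absurd (hTuniq e heT e0 he0T heq) hne
      · rw [if_neg h]
  have hQne : Q ≠ 0 := by
    intro h
    rw [h, Polynomial.coeff_zero] at hQa0
    exact one_ne_zero hQa0.symm
  -- factor out X^(m j) * (1+X)^(m j)
  set H : Polynomial (ZMod 2) :=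
    ∑ e ∈ T, Polynomial.X ^ (e i - m j) * (1 + Polynomial.X) ^ (e j - m j) with hHdef
  have hone_add_X_ne : (1 + Polynomial.X : Polynomial (ZMod 2)) ≠ 0 := by
    intro h
    have h1 : (1 + Polynomial.X : Polynomial (ZMod 2)).coeff 0 = 1 := by simp
    rw [h, Polynomial.coeff_zero] at h1
    exact one_ne_zero h1.symm
  have hfact : Q = (Polynomial.X ^ (m j) * (1 + Polynomial.X) ^ (m j)) * H := by
    rw [hQdef, hHdef, Finset.mul_sum]
    refine Finset.sum_congr rfl fun e he => ?_
    have h1 : e i = m j + (e i - m j) := by have := hTige e he; omega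
    have h2 : e j = m j + (e j - m j) := by have := hTjge e he; omega
    calc Polynomial.X ^ (e i) * (1 + Polynomial.X) ^ (e j)
        = Polynomial.X ^ (m j + (e i - m j)) * (1 + Polynomial.X) ^ (m j + (e j - m j)) := by
          rw [← h1, ← h2]
      _ = _ := by rw [pow_add, pow_add]; ring
  have hHne : H ≠ 0 := by
    intro h; rw [h, mul_zero] at hfact; exact hQne hfact
  have hAne : (Polynomial.X ^ (m j) * (1 + Polynomial.X) ^ (m j) : Polynomial (ZMod 2)) ≠ 0 :=
    mul_ne_zero (pow_ne_zero _ Polynomial.X_ne_zero) (pow_ne_zero _ hone_add_X_ne)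
  have hone_add_X_deg : (1 + Polynomial.X : Polynomial (ZMod 2)).natDegree = 1 := by
    rw [add_comm, ← Polynomial.C_1, Polynomial.natDegree_X_add_C]
  have hAdeg : (Polynomial.X ^ (m j) * (1 + Polynomial.X) ^ (m j)
      : Polynomial (ZMod 2)).natDegree = 2 * m j := by
    rw [Polynomial.natDegree_mul (pow_ne_zero _ Polynomial.X_ne_zero)
      (pow_ne_zero _ hone_add_X_ne), Polynomial.natDegree_pow, Polynomial.natDegree_pow,
      Polynomial.natDegree_X, hone_add_X_deg]
    ring
  have hdge : 2 * m j ≤ Q.natDegree := by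
    rw [hfact, Polynomial.natDegree_mul hAne hHne, hAdeg]
    exact Nat.le_add_right _ _
  have hdgt : m i < Q.natDegree := lt_of_lt_of_le hineq hdge
  have hdle : Q.natDegree ≤ m i + m j := by
    rw [hQdef]
    refine Polynomial.natDegree_sum_le_of_forall_le _ _ (fun e he => ?_)
    refine le_trans (Polynomial.natDegree_mul_le) ?_
    rw [Polynomial.natDegree_pow, Polynomial.natDegree_pow, Polynomial.natDegree_X,
      hone_add_X_deg]
    have := hTsum e he
    omega
  set d := Q.natDegree with hd
  -- the target monomial
  set μ : Fin n →₀ ℕ := (m.erase i).erase j + (single i d + single j (m i + m j - d)) with hμdef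
  have hμap : ∀ l, μ l = if l = i then d else if l = j then m i + m j - d else m l := by
    intro l
    rw [hμdef]
    rcases eq_or_ne l i with rfl | h1
    · simp [Finsupp.erase_apply, hijne, Finsupp.single_apply, Ne.symm hijne]
    · rcases eq_or_ne l j with rfl | h2
      · simp [Finsupp.erase_apply, Finsupp.single_apply, h1, Ne.symm h1]
      · simp [Finsupp.erase_apply, h1, h2, Finsupp.single_apply, Ne.symm h1, Ne.symm h2]
  have hμi : μ i = d := by rw [hμap]; simp
  have hμj : μ j = m i + m j - d := by rw [hμap]; simp [Ne.symm hijne]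
  have hμoff : ∀ l, l ≠ i → l ≠ j → μ l = m l := by
    intro l h1 h2; rw [hμap, if_neg h1, if_neg h2]
  -- the coefficient identity
  have hco : coeff μ (matAct (trMat i j) P) = Q.coeff d := by
    have h1 : matAct (trMat i j) P = aeval (phi i j) P := by
      unfold matAct
      rw [show (fun b => ∑ a, C (trMat i j a b) * X a) = phi i j from
        funext fun b => trMat_row i j hijne b]
    rw [h1]
    conv_lhs => rw [P.as_sum]
    rw [map_sum, coeff_sum]
    have hstep : ∀ e ∈ P.support, coeff μ (aeval (phi i j) (monomial e (coeff e P)))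
        = if (∀ l, l ≠ i → l ≠ j → e l = μ l) ∧ e i ≤ μ i ∧ e i + e j = μ i + μ j then
            ((e j).choose (μ i - e i) : ZMod 2) else 0 := by
      intro e he
      rw [zmod2_one (mem_support_iff.mp he), coeff_aeval_phi i j hijne e μ]
    rw [Finset.sum_congr rfl hstep, ← Finset.sum_filter]
    have hfeq : P.support.filter (fun e => (∀ l, l ≠ i → l ≠ j → e l = μ l)
        ∧ e i ≤ μ i ∧ e i + e j = μ i + μ j) = T := by
      rw [hTdef]
      refine Finset.filter_congr (fun e he => ?_)
      simp only [hμi, hμj]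
      constructor
      · rintro ⟨hoff, -, hsum⟩
        exact ⟨fun l h1 h2 => (hoff l h1 h2).trans (hμoff l h1 h2), by omega⟩
      · rintro ⟨hoff, hsum⟩
        have heT : e ∈ T := Finset.mem_filter.mpr ⟨he, hoff, hsum⟩
        have := hTle e heT
        exact ⟨fun l h1 h2 => (hoff l h1 h2).trans (hμoff l h1 h2).symm, by omega, by omega⟩
    rw [hfeq, hQcoeff d]
    refine Finset.sum_congr rfl fun e he => ?_
    rw [hμi, if_pos (le_trans (hTle e he) (le_of_lt hdgt))]
  have hμmem : μ ∈ (matAct (trMat i j) P).support := by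
    rw [mem_support_iff, hco]
    exact fun h => hQne (Polynomial.leadingCoeff_eq_zero.mp h)
  refine ⟨trMat i j, μ, hμmem, lex_lt_wit i (fun l hl => ?_) ?_⟩
  · exact (hμoff l (ne_of_lt hl) (ne_of_lt (lt_trans hl hij))).symm
  · rw [hμi]; exact hdgt

end Stmt6Aux

theorem stmt6 (n : ℕ) (P : MvPolynomial (Fin n) (ZMod 2)) (hP : P ≠ 0)
    (hhom : ∃ d, P.IsHomogeneous d) (m : Fin n →₀ ℕ)
    (hmem : m ∈ P.support) (hmax : ∀ e ∈ P.support, toLex e ≤ toLex m)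
    (hnadm : ∃ k : ℕ, ∃ h : k + 1 < n,
      m ⟨k, Nat.lt_of_succ_lt h⟩ < 2 * m ⟨k + 1, h⟩) :
    ∃ σ : Matrix (Fin n) (Fin n) (ZMod 2), ∃ m' ∈ (matAct σ P).support,
      (∀ e ∈ (matAct σ P).support, toLex e ≤ toLex m') ∧ toLex m < toLex m' := by
  classical
  obtain ⟨k, hk, hineq⟩ := hnadm
  set i : Fin n := ⟨k, Nat.lt_of_succ_lt hk⟩ with hi
  set j : Fin n := ⟨k + 1, hk⟩ with hj
  have hij : i < j := by rw [hi, hj, Fin.mk_lt_mk]; omega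
  by_cases hcase : ∃ e ∈ P.support, (∀ l, l < i → e l = m l) ∧ m i < e j
  · obtain ⟨e, he, hlow, hbig⟩ := hcase
    obtain ⟨σ, μ, hμ, hlt⟩ := Stmt6Aux.case_swap P m e he i j hij hlow hbig
    obtain ⟨m', h1, h2, h3⟩ := Stmt6Aux.pack _ m μ hμ hlt
    exact ⟨σ, m', h1, h2, h3⟩
  · push_neg at hcase
    obtain ⟨σ, μ, hμ, hlt⟩ := Stmt6Aux.case_trans P m hmem hmax i j hij hcase hineq
    obtain ⟨m', h1, h2, h3⟩ := Stmt6Aux.pack _ m μ hμ hlt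
    exact ⟨σ, m', h1, h2, h3⟩
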